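/- For every ε with 0 < ε < 1/2 there exists H₀ > 0 such that for all H ≥ H₀, the map f(z) = h_H(z − 1/2) sends the interval [1 − ε, 1] into itself and is a contraction on [1 − ε, 1] (its derivative satisfies |f′(z)| < 1 for all z ∈ [1 − ε, 1], with a contraction constant strictly less than 1); consequently f has a unique fixed point in [1 − ε, 1], and this fixed point is stable. -/

import Mathlib

open Filter

/-- The parametrized sigmoid `h_H(x) = 1/(1 + exp(−H·x))`. -/
noncomputable def sigmoidH (H x : ℝ) : ℝ := 1 / (1 + Real.exp (-H * x))

theorem stmt_7 (ε : ℝ) (hεpos : 0 < ε) (hεlt : ε < 1 / 2) :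
    ∃ H₀ > (0 : ℝ), ∀ H ≥ H₀,
      let f : ℝ → ℝ := fun z => sigmoidH H (z - 1 / 2)
      -- `f` maps `[1 − ε, 1]` into itself
      Set.MapsTo f (Set.Icc (1 - ε) 1) (Set.Icc (1 - ε) 1) ∧
      -- the derivative of `f` is strictly less than 1 in absolute value on `[1 − ε, 1]`
      (∀ z ∈ Set.Icc (1 - ε) (1 : ℝ), |deriv f z| < 1) ∧
      -- `f` is a contraction on `[1 − ε, 1]` with contraction constant strictly less than 1
      (∃ L : NNReal, L < 1 ∧ LipschitzOnWith L f (Set.Icc (1 - ε) 1)) ∧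
      -- consequently `f` has a unique fixed point in `[1 − ε, 1]`, and it is stable:
      -- iterates of `f` starting anywhere in `[1 − ε, 1]` converge to it
      (∃ zf ∈ Set.Icc (1 - ε) (1 : ℝ), f zf = zf ∧
        (∀ z ∈ Set.Icc (1 - ε) (1 : ℝ), f z = z → z = zf) ∧
        (∀ z₀ ∈ Set.Icc (1 - ε) (1 : ℝ),
          Tendsto (fun k => f^[k] z₀) atTop (nhds zf))) := by
  set δ : ℝ := 1 / 2 - ε with hδdef
  have hδ : 0 < δ := by simp [hδdef]; linarith
  refine ⟨max (8 / δ ^ 2) (1 / (δ * ε)), lt_max_of_lt_left (by positivity), ?_⟩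
  intro H hH
  intro f
  have hH1 : 8 / δ ^ 2 ≤ H := le_trans (le_max_left _ _) hH
  have hH2 : 1 / (δ * ε) ≤ H := le_trans (le_max_right _ _) hH
  have hHpos : 0 < H := lt_of_lt_of_le (by positivity) hH1
  have hs : Set.Icc (1 - ε) (1 : ℝ) = Set.Icc (1 - ε) 1 := rfl
  -- for z in the interval, z - 1/2 ≥ δ
  have ht : ∀ z ∈ Set.Icc (1 - ε) (1 : ℝ), δ ≤ z - 1 / 2 := by
    intro z hz
    have := hz.1
    simp [hδdef]; linarith
  -- exp bound : exp (-H * (z - 1/2)) ≤ exp (-(H * δ))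
  have hexp_le : ∀ z ∈ Set.Icc (1 - ε) (1 : ℝ),
      Real.exp (-H * (z - 1 / 2)) ≤ Real.exp (-(H * δ)) := by
    intro z hz
    apply Real.exp_le_exp.2
    have := ht z hz
    nlinarith
  -- key smallness : exp (-(H*δ)) ≤ ε  (since H δ ≥ 1/ε and e^x > x)
  have hHδ : 1 / ε ≤ H * δ := by
    rw [div_le_iff₀ hεpos] at *
    have h1 : 1 / (δ * ε) * (δ * ε) ≤ H * (δ * ε) := by
      apply mul_le_mul_of_nonneg_right hH2 (by positivity)
    rw [one_div_mul_cancel (by positivity)] at h1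
    nlinarith
  have hexp_eps : Real.exp (-(H * δ)) ≤ ε := by
    rw [Real.exp_neg]
    rw [inv_le_iff_one_le_mul₀ (Real.exp_pos _)]
    calc (1 : ℝ) = ε * (1/ε) := by field_simp
    _ ≤ ε * (H * δ) := by
        apply mul_le_mul_of_nonneg_left hHδ hεpos.le
    _ ≤ ε * Real.exp (H * δ) := by
        have h := Real.add_one_le_exp (H * δ)
        nlinarith
  -- derivative of f
  have hderivf : ∀ z : ℝ, HasDerivAt f
      (H * Real.exp (-H * (z - 1 / 2)) / (1 + Real.exp (-H * (z - 1 / 2))) ^ 2) z := by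
    intro z
    have hden : (0 : ℝ) < 1 + Real.exp (-H * (z - 1 / 2)) := by positivity
    have h1 : HasDerivAt (fun z : ℝ => -H * (z - 1 / 2)) (-H) z := by
      exact (((hasDerivAt_id z).sub_const (1 / 2)).const_mul (-H)).congr_deriv (by ring)
    have h2 := h1.exp
    have h3 := h2.const_add 1
    have h4 := h3.inv (ne_of_gt hden)
    have heq : f = fun z : ℝ => (1 + Real.exp (-H * (z - 1 / 2)))⁻¹ := by
      funext z; simp [f, sigmoidH, one_div]
    rw [heq]
    exact h4.congr_deriv (by ring)
  have hE_pos : ∀ z : ℝ, (0 : ℝ) < Real.exp (-H * (z - 1 / 2)) := fun z => Real.exp_pos _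
  -- bound on exp(-(H*δ)) : ≤ 4/(H^2 δ^2)
  have hexp_small : Real.exp (-(H * δ)) ≤ 4 / (H ^ 2 * δ ^ 2) := by
    have h1 : (H * δ / 2) ≤ Real.exp (H * δ / 2) := by
      have := Real.add_one_le_exp (H * δ / 2); linarith
    have h2 : (H * δ / 2) ^ 2 ≤ Real.exp (H * δ) := by
      have h3 : Real.exp (H * δ) = Real.exp (H * δ / 2) ^ 2 := by
        rw [sq, ← Real.exp_add]; ring_nf
      rw [h3]
      apply sq_le_sq' (by nlinarith [Real.exp_pos (H * δ / 2)]) h1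
    rw [Real.exp_neg]
    rw [inv_le_iff_one_le_mul₀ (Real.exp_pos _)]
    have h4 : (0:ℝ) < 4 / (H ^ 2 * δ ^ 2) := by positivity
    calc (1 : ℝ) = (4 / (H ^ 2 * δ ^ 2)) * ((H * δ / 2) ^ 2) := by field_simp; ring
    _ ≤ (4 / (H ^ 2 * δ ^ 2)) * Real.exp (H * δ) := by
        apply mul_le_mul_of_nonneg_left h2 h4.le
  -- |deriv f z| ≤ 1/2 on the interval
  have hdb : ∀ z ∈ Set.Icc (1 - ε) (1 : ℝ), |deriv f z| ≤ 1 / 2 := by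
    intro z hz
    rw [(hderivf z).deriv]
    set E := Real.exp (-H * (z - 1 / 2)) with hE
    have hE0 : 0 < E := hE_pos z
    have h1 : |H * E / (1 + E) ^ 2| = H * E / (1 + E) ^ 2 := by
      rw [abs_of_nonneg]; positivity
    rw [h1]
    have h2 : H * E / (1 + E) ^ 2 ≤ H * E := by
      apply div_le_self (by positivity)
      nlinarith
    have h3 : E ≤ Real.exp (-(H * δ)) := hexp_le z hz
    have h4 : H * E ≤ H * (4 / (H ^ 2 * δ ^ 2)) :=
      mul_le_mul_of_nonneg_left (h3.trans hexp_small) hHpos.le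
    have h5 : H * (4 / (H ^ 2 * δ ^ 2)) ≤ 1 / 2 := by
      have hHδ2 : 8 ≤ H * δ ^ 2 := by
        rw [div_le_iff₀ (by positivity)] at hH1; linarith
      rw [show H * (4 / (H ^ 2 * δ ^ 2)) = 4 / (H * δ ^ 2) from by field_simp]
      rw [div_le_div_iff₀ (by positivity) (by norm_num)]
      linarith
    linarith
  have hderiv_lt : ∀ z ∈ Set.Icc (1 - ε) (1 : ℝ), |deriv f z| < 1 := fun z hz =>
    lt_of_le_of_lt (hdb z hz) (by norm_num)
  -- MapsTo
  have hmaps : Set.MapsTo f (Set.Icc (1 - ε) 1) (Set.Icc (1 - ε) 1) := by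
    intro z hz
    set E := Real.exp (-H * (z - 1 / 2)) with hE
    have hE0 : 0 < E := hE_pos z
    have hEε : E ≤ ε := (hexp_le z hz).trans hexp_eps
    have hfz : f z = 1 / (1 + E) := rfl
    constructor
    · rw [hfz, le_div_iff₀ (by positivity)]
      nlinarith
    · rw [hfz, div_le_one (by positivity)]
      linarith
  -- Lipschitz with constant 1/2
  have hlip : LipschitzOnWith (1/2 : NNReal) f (Set.Icc (1 - ε) 1) := by
    apply (convex_Icc _ _).lipschitzOnWith_of_nnnorm_deriv_le
      (fun z _ => (hderivf z).differentiableAt)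
    intro z hz
    have h := hdb z hz
    rw [← NNReal.coe_le_coe, coe_nnnorm, Real.norm_eq_abs]
    calc |deriv f z| ≤ 1 / 2 := h
    _ = ((1/2 : NNReal) : ℝ) := by norm_num
  have hL1 : (1/2 : NNReal) < 1 := by rw [← NNReal.coe_lt_coe]; norm_num
  refine ⟨hmaps, hderiv_lt, ⟨1/2, hL1, hlip⟩, ?_⟩
  -- fixed point via Banach
  have hsc : IsComplete (Set.Icc (1 - ε) (1 : ℝ)) := (isClosed_Icc).isComplete
  have hcontr : ContractingWith (1/2 : NNReal)
      (hmaps.restrict f (Set.Icc (1 - ε) 1) (Set.Icc (1 - ε) 1)) :=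
    ⟨hL1, hlip.mapsToRestrict hmaps⟩
  have h1mem : (1 : ℝ) ∈ Set.Icc (1 - ε) (1 : ℝ) := ⟨by linarith, le_refl 1⟩
  obtain ⟨zf, hzfmem, hzfix, hzftendsto, -⟩ :=
    hcontr.exists_fixedPoint' hsc hmaps h1mem (edist_ne_top _ _)
  -- uniqueness of fixed points in the set
  have huniq : ∀ z ∈ Set.Icc (1 - ε) (1 : ℝ), f z = z → z = zf := by
    intro z hz hfix
    have hd := hlip.dist_le_mul z hz zf hzfmem
    rw [hfix, hzfix] at hd
    have : ((1/2 : NNReal) : ℝ) = 1 / 2 := by norm_num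
    rw [this] at hd
    have := dist_nonneg (x := z) (y := zf)
    have : dist z zf = 0 := by linarith
    exact dist_eq_zero.mp this
  refine ⟨zf, hzfmem, hzfix, huniq, ?_⟩
  intro z₀ hz₀
  obtain ⟨y, hymem, hyfix, hytendsto, -⟩ :=
    hcontr.exists_fixedPoint' hsc hmaps hz₀ (edist_ne_top _ _)
  rwa [huniq y hymem hyfix] at hytendsto
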